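/- Fix a positive integer n and μ ∈ ℓ₁(T) with ‖μ‖₁ ≤ 1, where T is the infinite binary tree. Let Υ^μ be the n-essential subtree of T: nodes are included starting from the root while ‖μ‖(t) > |t|/n, where ‖μ‖(t) = Σ_{u ⪰ t} |μ(u)|, and the construction is stopped at nodes where ‖μ‖(t) ≤ |t|/n. If Q denotes the set of terminal (leaf) nodes of Υ^μ, then Σ_{t∈Q} |t| ≤ n. Moreover, the total size of Υ^μ satisfies Σ_{l=1}^{∞} |Υ^μ ∩ T_l| ≤ n + 1, where T_l is the set of nodes of level l. -/

import Mathlib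

open scoped ENNReal

/-- A node of the infinite binary tree `T` is a finite binary string;
its level `|t|` is its length. -/
abbrev Node : Type := List Bool

/-- `μ` belongs to `ℓ₁(T)`, i.e. `Σ_t |μ(t)| < ∞`. -/
def MemL1 (μ : Node → ℝ) : Prop := Summable fun t : Node => |μ t|

/-- The `ℓ₁(T)` norm `‖μ‖₁ = Σ_t |μ(t)|`. -/
noncomputable def l1Norm (μ : Node → ℝ) : ℝ := ∑' t : Node, |μ t|

/-- `(V*μ)(t) = Σ_{u ⪰ t} μ(u)`, the sum over all nodes `u` having `t` as a prefix
(including `u = t`). -/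
noncomputable def Vstar (μ : Node → ℝ) (t : Node) : ℝ := ∑' u : {u : Node // t <+: u}, μ u.1

/-- The weight `w(t) = (1 + |t|)^{-β}`. -/
noncomputable def wgt (β : ℝ) (t : Node) : ℝ := ((1 : ℝ) + (t.length : ℝ)) ^ (-β)

/-- The squared distance of `f, g` in the weighted space `ℓ₂(T,W)`,
`Σ_t w(t) (f(t) - g(t))²`, computed in `ℝ≥0∞`. -/
noncomputable def distSqW (β : ℝ) (f g : Node → ℝ) : ℝ≥0∞ :=
  ∑' t : Node, ENNReal.ofReal (wgt β t * (f t - g t) ^ 2)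

/-- The variation of `μ` at `t`: `‖μ‖(t) = Σ_{u ⪰ t} |μ(u)|`. -/
noncomputable def varAt (μ : Node → ℝ) (t : Node) : ℝ :=
  ∑' u : {u : Node // t <+: u}, |μ u.1|

/-- The `n`-essential subtree `Υ^μ`: starting from the root, a node is included
as long as `‖μ‖(t) > |t|/n`; the construction stops at nodes with `‖μ‖(t) ≤ |t|/n`.
Thus `t ∈ Υ^μ` iff every prefix `s` of `t` (including `t` itself) satisfies
`‖μ‖(s) > |s|/n`. -/
def essTree (n : ℕ) (μ : Node → ℝ) : Set Node :=
  {t : Node | ∀ s : Node, s <+: t → (s.length : ℝ) / (n : ℝ) < varAt μ s}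

/-- The terminal (leaf) nodes of a subtree `Υ`: nodes of `Υ` none of whose children
belongs to `Υ`. -/
def terminalNodes (Υ : Set Node) : Set Node :=
  {t : Node | t ∈ Υ ∧ ∀ b : Bool, t ++ [b] ∉ Υ}

/-- Size bounds for the `n`-essential subtree: if `‖μ‖₁ ≤ 1`, then the terminal
nodes `Q` of `Υ^μ` satisfy `Σ_{t ∈ Q} |t| ≤ n`, and the total size satisfies
`Σ_{l=1}^∞ |Υ^μ ∩ T_l| ≤ n + 1`. -/
lemma essTree_prefix_closed (n : ℕ) (μ : Node → ℝ) {s t : Node} (hs : s <+: t)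
    (ht : t ∈ essTree n μ) : s ∈ essTree n μ :=
  fun r hr => ht r (hr.trans hs)

lemma varAt_le_l1Norm (μ : Node → ℝ) (hμ : MemL1 μ) (t : Node) : varAt μ t ≤ l1Norm μ :=
  Summable.tsum_le_tsum_of_inj (Subtype.val) Subtype.coe_injective
    (fun u _ => abs_nonneg _) (fun _ => le_rfl) (hμ.subtype _) hμ

lemma length_lt_of_mem_essTree (n : ℕ) (μ : Node → ℝ) (hn : 0 < n) (hμ : MemL1 μ)
    (hμ1 : l1Norm μ ≤ 1) {t : Node} (ht : t ∈ essTree n μ) : t.length < n := by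
  have h := ht t List.prefix_rfl
  have h1 : (t.length : ℝ) / n < 1 :=
    lt_of_lt_of_le h ((varAt_le_l1Norm μ hμ t).trans hμ1)
  have hn' : (0 : ℝ) < n := by exact_mod_cast hn
  rw [div_lt_one hn'] at h1
  exact_mod_cast h1

lemma exists_terminal_above (n : ℕ) (μ : Node → ℝ) (hn : 0 < n) (hμ : MemL1 μ)
    (hμ1 : l1Norm μ ≤ 1) :
    ∀ k t, t ∈ essTree n μ → n - t.length ≤ k →
      ∃ q, q ∈ terminalNodes (essTree n μ) ∧ t <+: q := by
  intro k
  induction k with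
  | zero =>
    intro t ht hk
    exact absurd (length_lt_of_mem_essTree n μ hn hμ hμ1 ht) (by omega)
  | succ k ih =>
    intro t ht hk
    by_cases h : ∀ b : Bool, t ++ [b] ∉ essTree n μ
    · exact ⟨t, ⟨ht, h⟩, List.prefix_rfl⟩
    · push_neg at h
      obtain ⟨b, hb⟩ := h
      have hlen : (t ++ [b]).length = t.length + 1 := by simp
      have hlt := length_lt_of_mem_essTree n μ hn hμ hμ1 hb
      obtain ⟨q, hq, hpre⟩ := ih (t ++ [b]) hb (by omega)
      exact ⟨q, hq, (List.prefix_append t [b]).trans hpre⟩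

lemma terminal_eq_of_prefix (n : ℕ) (μ : Node → ℝ) {t t' : Node}
    (ht : t ∈ terminalNodes (essTree n μ)) (ht' : t' ∈ essTree n μ)
    (h : t <+: t') : t = t' := by
  obtain ⟨r, rfl⟩ := h
  cases r with
  | nil => simp
  | cons b r' =>
    exfalso
    apply ht.2 b
    exact essTree_prefix_closed n μ ⟨r', by simp⟩ ht'

lemma terminal_antichain (n : ℕ) (μ : Node → ℝ) {t t' u : Node}
    (ht : t ∈ terminalNodes (essTree n μ)) (ht' : t' ∈ terminalNodes (essTree n μ))
    (h1 : t <+: u) (h2 : t' <+: u) : t = t' := by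
  rcases List.prefix_or_prefix_of_prefix h1 h2 with h | h
  · exact terminal_eq_of_prefix n μ ht ht'.1 h
  · exact (terminal_eq_of_prefix n μ ht' ht.1 h).symm

theorem essential_subtree_size (n : ℕ) (hn : 0 < n) (μ : Node → ℝ)
    (hμ : MemL1 μ) (hμ1 : l1Norm μ ≤ 1) :
    (∑' t : terminalNodes (essTree n μ), (t.1.length : ℝ≥0∞)) ≤ (n : ℝ≥0∞) ∧
      (∑' l : ℕ, (essTree n μ ∩ {t : Node | t.length = l + 1}).encard) ≤ (n : ℝ≥0∞) + 1 := by
  classical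
  set Q := terminalNodes (essTree n μ) with hQdef
  -- auxiliary : ofReal of varAt as an ENNReal tsum
  have hν : ∀ t : Node, ENNReal.ofReal (varAt μ t)
      = ∑' u : {u : Node // t <+: u}, ENNReal.ofReal |μ u.1| := fun t =>
    ENNReal.ofReal_tsum_of_nonneg (fun u => abs_nonneg _) (hμ.subtype _)
  have htot : (∑' u : Node, ENNReal.ofReal |μ u|) ≤ 1 := by
    rw [← ENNReal.ofReal_tsum_of_nonneg (fun u => abs_nonneg _) hμ]
    exact ENNReal.ofReal_le_one.2 hμ1
  -- the sum of variations over the (antichain of) terminal nodes is at most 1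
  have hQsum : (∑' t : Q, ENNReal.ofReal (varAt μ t.1)) ≤ 1 := by
    calc ∑' t : Q, ENNReal.ofReal (varAt μ t.1)
        = ∑' t : Q, ∑' u : {u : Node // t.1 <+: u}, ENNReal.ofReal |μ u.1| :=
          tsum_congr fun t => hν t.1
      _ = ∑' p : (Σ t : Q, {u : Node // t.1 <+: u}), ENNReal.ofReal |μ p.2.1| :=
          (ENNReal.tsum_sigma'
            (fun p : (Σ t : Q, {u : Node // t.1 <+: u}) => ENNReal.ofReal |μ p.2.1|)).symm
      _ ≤ ∑' u : Node, ENNReal.ofReal |μ u| := by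
          refine ENNReal.tsum_comp_le_tsum_of_injective
            (f := fun p : (Σ t : Q, {u : Node // t.1 <+: u}) => p.2.1) ?_
            (fun u => ENNReal.ofReal |μ u|)
          rintro ⟨⟨t, ht⟩, ⟨u, hu⟩⟩ ⟨⟨t', ht'⟩, ⟨u', hu'⟩⟩ h
          simp only at h
          subst h
          have : t = t' := terminal_antichain n μ ht ht' hu hu'
          subst this
          rfl
      _ ≤ 1 := htot
  -- first bound
  have part1 : (∑' t : Q, (t.1.length : ℝ≥0∞)) ≤ (n : ℝ≥0∞) := by
    have hstep : ∀ t : Q, (t.1.length : ℝ≥0∞) ≤ (n : ℝ≥0∞) * ENNReal.ofReal (varAt μ t.1) := by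
      intro t
      have hmem := t.2.1 t.1 List.prefix_rfl
      have hn' : (0 : ℝ) < n := by exact_mod_cast hn
      have hreal : (t.1.length : ℝ) ≤ (n : ℝ) * varAt μ t.1 := by
        rw [div_lt_iff₀ hn'] at hmem
        nlinarith
      calc (t.1.length : ℝ≥0∞) = ENNReal.ofReal (t.1.length : ℝ) :=
            (ENNReal.ofReal_natCast _).symm
        _ ≤ ENNReal.ofReal ((n : ℝ) * varAt μ t.1) := ENNReal.ofReal_le_ofReal hreal
        _ = ENNReal.ofReal (n : ℝ) * ENNReal.ofReal (varAt μ t.1) :=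
            ENNReal.ofReal_mul (by positivity)
        _ = (n : ℝ≥0∞) * ENNReal.ofReal (varAt μ t.1) := by rw [ENNReal.ofReal_natCast]
    calc (∑' t : Q, (t.1.length : ℝ≥0∞))
        ≤ ∑' t : Q, (n : ℝ≥0∞) * ENNReal.ofReal (varAt μ t.1) := ENNReal.tsum_le_tsum hstep
      _ = (n : ℝ≥0∞) * ∑' t : Q, ENNReal.ofReal (varAt μ t.1) := ENNReal.tsum_mul_left
      _ ≤ (n : ℝ≥0∞) * 1 := mul_le_mul_right hQsum _
      _ = (n : ℝ≥0∞) := mul_one _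
  refine ⟨part1, ?_⟩
  -- second bound
  have hchoice : ∀ p : (Σ l : ℕ, ↥(essTree n μ ∩ {t : Node | t.length = l + 1})),
      ∃ q, q ∈ Q ∧ p.2.1 <+: q := fun p =>
    exists_terminal_above n μ hn hμ hμ1 n p.2.1 p.2.2.1 (Nat.sub_le _ _)
  set f : (Σ l : ℕ, ↥(essTree n μ ∩ {t : Node | t.length = l + 1}))
      → (Σ t : Q, Fin t.1.length) := fun p =>
    ⟨⟨(hchoice p).choose, (hchoice p).choose_spec.1⟩,
      ⟨p.1, by
        show p.1 < (hchoice p).choose.length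
        have h1 := (hchoice p).choose_spec.2.length_le
        have h2 : p.2.1.length = p.1 + 1 := p.2.2.2
        omega⟩⟩ with hfdef
  have hfinj : Function.Injective f := by
    intro p p' h
    have hq : (hchoice p).choose = (hchoice p').choose :=
      congrArg (fun z : (Σ t : Q, Fin t.1.length) => z.1.1) h
    have hl : p.1 = p'.1 := congrArg (fun z : (Σ t : Q, Fin t.1.length) => (z.2 : ℕ)) h
    obtain ⟨l, ⟨t, ht⟩⟩ := p
    obtain ⟨l', ⟨t', ht'⟩⟩ := p'
    simp only at hl
    subst hl
    have hpre := (hchoice ⟨l, ⟨t, ht⟩⟩).choose_spec.2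
    have hpre' := (hchoice ⟨l, ⟨t', ht'⟩⟩).choose_spec.2
    rw [← hq] at hpre'
    have hlen : t.length = t'.length := by
      have e1 : t.length = l + 1 := ht.2
      have e2 : t'.length = l + 1 := ht'.2
      omega
    have : t = t' := by
      rcases List.prefix_or_prefix_of_prefix hpre hpre' with hc | hc
      · exact hc.eq_of_length hlen
      · exact (hc.eq_of_length hlen.symm).symm
    subst this
    rfl
  have hENN : (∑' l : ℕ, ((essTree n μ ∩ {t : Node | t.length = l + 1}).encard : ℝ≥0∞))
      ≤ (n : ℝ≥0∞) + 1 :=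
    calc (∑' l : ℕ, ((essTree n μ ∩ {t : Node | t.length = l + 1}).encard : ℝ≥0∞))
        = ∑' l : ℕ, ∑' _ : ↥(essTree n μ ∩ {t : Node | t.length = l + 1}), (1 : ℝ≥0∞) := by
          simp only [ENNReal.tsum_set_one]
      _ = ∑' _ : (Σ l : ℕ, ↥(essTree n μ ∩ {t : Node | t.length = l + 1})), (1 : ℝ≥0∞) :=
          (ENNReal.tsum_sigma' (fun _ : (Σ l : ℕ,
            ↥(essTree n μ ∩ {t : Node | t.length = l + 1})) => (1 : ℝ≥0∞))).symm
      _ ≤ ∑' _ : (Σ t : Q, Fin t.1.length), (1 : ℝ≥0∞) :=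
          ENNReal.tsum_comp_le_tsum_of_injective hfinj (fun _ => (1 : ℝ≥0∞))
      _ = ∑' t : Q, ∑' _ : Fin t.1.length, (1 : ℝ≥0∞) :=
          ENNReal.tsum_sigma' (fun _ : (Σ t : Q, Fin t.1.length) => (1 : ℝ≥0∞))
      _ = ∑' t : Q, (t.1.length : ℝ≥0∞) := by
          refine tsum_congr fun t => ?_
          simp [tsum_fintype]
      _ ≤ (n : ℝ≥0∞) := part1
      _ ≤ (n : ℝ≥0∞) + 1 := le_self_add
  have hfin : ∀ s : Finset ℕ,
      (∑ l ∈ s, (essTree n μ ∩ {t : Node | t.length = l + 1}).encard) ≤ ((n : ℕ∞) + 1) := by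
    intro s
    rw [← ENat.toENNReal_le]
    calc ((∑ l ∈ s, (essTree n μ ∩ {t : Node | t.length = l + 1}).encard : ℕ∞) : ℝ≥0∞)
        = ∑ l ∈ s, ((essTree n μ ∩ {t : Node | t.length = l + 1}).encard : ℝ≥0∞) :=
          map_sum ENat.toENNRealRingHom _ s
      _ ≤ ∑' l : ℕ, ((essTree n μ ∩ {t : Node | t.length = l + 1}).encard : ℝ≥0∞) :=
          ENNReal.sum_le_tsum s
      _ ≤ (n : ℝ≥0∞) + 1 := hENN
      _ = (((n : ℕ∞) + 1 : ℕ∞) : ℝ≥0∞) := by simp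
  have htsumEN : (∑' l : ℕ, (essTree n μ ∩ {t : Node | t.length = l + 1}).encard)
      ≤ ((n : ℕ∞) + 1) := by
    have hs : HasSum (fun l : ℕ => (essTree n μ ∩ {t : Node | t.length = l + 1}).encard)
        (sSup (Set.range fun s : Finset ℕ =>
          ∑ l ∈ s, (essTree n μ ∩ {t : Node | t.length = l + 1}).encard)) :=
      hasSum_of_isLUB _ (isLUB_sSup _)
    rw [hs.tsum_eq]
    exact sSup_le (by rintro x ⟨s, rfl⟩; exact hfin s)
  calc ((∑' l : ℕ, (essTree n μ ∩ {t : Node | t.length = l + 1}).encard : ℕ∞) : ℝ≥0∞)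
      ≤ (((n : ℕ∞) + 1 : ℕ∞) : ℝ≥0∞) := ENat.toENNReal_le.2 htsumEN
    _ = (n : ℝ≥0∞) + 1 := by simp
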